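/- For all integers r ≥ 2, s ≥ 0, k ≥ 2 there exists α = α(r, s, k) ∈ ℝ such that, setting β := s(2^{r-1} − 1): for any (not necessarily finite) r-grid B and any finite K_{k,…,k}-free subset A ⊆ B of grid-complexity at most s, one has |A| ≤ α · δ^r_{r-1}(A) · log^β(δ^r_{r-1}(A) + 1), where δ^r_{r-1}(A) := δ^r_{r-1}(A_1 × ⋯ × A_r) with A_i := π_i(A) the projection of A to B_i. -/

import Mathlib

/-- Coordinate-wise monotone function on an `r`-grid. -/
def CoordWiseMonotone {r : ℕ} {B : Fin r → Type} {S : Type} [LinearOrder S]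
    (f : (∀ i, B i) → S) : Prop :=
  ∀ (i : Fin r) (x x' : ∀ j, B j) (b b' : B i),
    (f (Function.update x i b) ≤ f (Function.update x i b') ↔
      f (Function.update x' i b) ≤ f (Function.update x' i b'))

/-- A basic subset of an `r`-grid. -/
def IsBasicSet {r : ℕ} {B : Fin r → Type} (X : Set (∀ i, B i)) : Prop :=
  ∃ (S : Type) (_ : LinearOrder S) (f : (∀ i, B i) → S) (l : S),
    CoordWiseMonotone f ∧ X = {x | f x < l}

/-- `A` has grid-complexity `s`: it is the intersection of the grid with
`s` basic sets. -/
def HasGridComplexity {r : ℕ} {B : Fin r → Type} (A : Set (∀ i, B i)) (s : ℕ) : Prop :=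
  ∃ X : Fin s → Set (∀ i, B i), (∀ j, IsBasicSet (X j)) ∧ A = ⋂ j, X j

/-- `A ⊆ B₁ × ⋯ × B_r` is `K_{k,…,k}`-free: it contains no sub-grid `C₁ × ⋯ × C_r`
with `|C_i| = k` for all `i`. -/
def KkFree {r : ℕ} {B : Fin r → Type} (A : Set (∀ i, B i)) (k : ℕ) : Prop :=
  ¬ ∃ C : ∀ i, Finset (B i), (∀ i, (C i).card = k) ∧
      ∀ x : ∀ i, B i, (∀ i, x i ∈ C i) → x ∈ A

/-- `δ^r_{r-1}(A) := δ^r_{r-1}(A₁ × ⋯ × A_r)` where `A_i := π_i(A)` is the projection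
of `A` to the `i`-th coordinate, i.e. `Σ_{i ∈ [r]} Π_{j ≠ i} |π_j(A)|`. -/
noncomputable def projDelta {r : ℕ} {B : Fin r → Type} (A : Set (∀ i, B i)) : ℕ :=
  ∑ i : Fin r, ∏ j ∈ Finset.univ.erase i, ((fun x => x j) '' A).ncard


/-- Total-preorder downset structure. -/
def IsTpoDownset {r : ℕ} {B : Fin r → Type} (X : Set (∀ i, B i)) : Prop :=
  ∃ P : ∀ i, B i → B i → Prop,
    (∀ i b, P i b b) ∧ (∀ i b b', P i b b' ∨ P i b' b) ∧
    (∀ x y : ∀ i, B i, (∀ i, P i (y i) (x i)) → x ∈ X → y ∈ X)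

lemma isTpoDownset_of_basic {r : ℕ} {B : Fin r → Type} {X : Set (∀ i, B i)}
    (h : IsBasicSet X) : IsTpoDownset X := by
  obtain ⟨S, linS, f, l, hmono, rfl⟩ := h
  refine ⟨fun i b b' => ∀ x, f (Function.update x i b) ≤ f (Function.update x i b'),
    fun i b x => le_refl _, ?_, ?_⟩
  · intro i b b'
    by_cases h : ∀ x, f (Function.update x i b) ≤ f (Function.update x i b')
    · exact Or.inl h
    · push_neg at h
      obtain ⟨x₀, hx₀⟩ := h
      exact Or.inr fun x => (hmono i x x₀ b' b).mpr hx₀.le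
  · intro x y hxy hx
    simp only [Set.mem_setOf_eq] at hx ⊢
    have hchain : ∀ t : ℕ, t ≤ r → f (fun (j : Fin r) => if (j : ℕ) < t then y j else x j) ≤ f x := by
      intro t
      induction t with
      | zero => intro _; simp
      | succ t ih =>
        intro ht
        have h1 := ih (Nat.le_of_succ_le ht)
        set i : Fin r := ⟨t, ht⟩ with hi
        set g : ∀ j, B j := fun (j : Fin r) => if (j : ℕ) < t then y j else x j with hg
        have he : (fun (j : Fin r) => if (j : ℕ) < t + 1 then y j else x j) =
            Function.update g i (y i) := by
          funext j
          by_cases hj : j = i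
          · subst hj; simp [hg, hi]
          · rw [Function.update_of_ne hj]
            have hvj : (j : ℕ) ≠ t := fun hv => hj (Fin.ext hv)
            simp only [hg]
            by_cases h2 : (j : ℕ) < t
            · rw [if_pos (by omega), if_pos h2]
            · rw [if_neg (by omega), if_neg h2]
        have hgi : g i = x i := by simp [hg, hi]
        have h2 : f (Function.update g i (y i)) ≤ f (Function.update g i (x i)) := hxy i g
        rw [he]
        refine le_trans h2 ?_
        rw [hgi.symm, Function.update_eq_self]
        exact h1
    have hy : (fun (j : Fin r) => if (j : ℕ) < r then y j else x j) = y := funext fun j => if_pos j.isLt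
    calc f y = f (fun (j : Fin r) => if (j : ℕ) < r then y j else x j) := by rw [hy]
    _ ≤ f x := hchain r le_rfl
    _ < l := hx


lemma nat_lt_div_succ_mul (a b : ℕ) (hb : 0 < b) : a < (a / b + 1) * b := by
  rw [Nat.add_mul, one_mul]
  exact Nat.lt_div_mul_add hb

lemma dyadic_aux {m L i i' : ℕ} (hi' : i' < m)
    (hL : Nat.findGreatest (fun ℓ => (i / 2 ^ ℓ + 1) * 2 ^ ℓ ≤ m) m = L)
    (hL' : Nat.findGreatest (fun ℓ => (i' / 2 ^ ℓ + 1) * 2 ^ ℓ ≤ m) m = L)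
    (hlt : i / 2 ^ L < i' / 2 ^ L) : False := by
  have hspec' : (i' / 2 ^ L + 1) * 2 ^ L ≤ m := by
    have h0 : (i' / 2 ^ 0 + 1) * 2 ^ 0 ≤ m := by simpa using hi'
    have := Nat.findGreatest_spec (P := fun ℓ => (i' / 2 ^ ℓ + 1) * 2 ^ ℓ ≤ m)
      (Nat.zero_le m) h0
    rwa [hL'] at this
  set q := i / 2 ^ L with hq
  set q' := i' / 2 ^ L with hq'
  have hP : (i / 2 ^ (L + 1) + 1) * 2 ^ (L + 1) ≤ m := by
    have hdd : i / 2 ^ (L + 1) = q / 2 := by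
      rw [hq, pow_succ, Nat.div_div_eq_div_mul]
    rw [hdd, pow_succ]
    calc (q / 2 + 1) * (2 ^ L * 2) = (q / 2 * 2) * 2 ^ L + 2 * 2 ^ L := by ring
    _ ≤ q * 2 ^ L + 2 * 2 ^ L := by
        have := Nat.div_mul_le_self q 2
        exact Nat.add_le_add_right (Nat.mul_le_mul_right _ this) _
    _ = (q + 2) * 2 ^ L := by ring
    _ ≤ (q' + 1) * 2 ^ L := Nat.mul_le_mul_right _ (by omega)
    _ ≤ m := hspec'
  have hLe : L + 1 ≤ m := by
    have h1 : 2 ^ (L + 1) ≤ m := le_trans (Nat.le_mul_of_pos_left _ (Nat.succ_pos _)) hP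
    exact le_trans (Nat.lt_two_pow_self (n := L + 1)).le h1
  exact Nat.findGreatest_is_greatest (by omega : Nat.findGreatest
      (fun ℓ => (i / 2 ^ ℓ + 1) * 2 ^ ℓ ≤ m) m < L + 1) hLe hP

lemma dyadic_unique {m L i i' : ℕ} (hi : i < m) (hi' : i' < m)
    (hL : Nat.findGreatest (fun ℓ => (i / 2 ^ ℓ + 1) * 2 ^ ℓ ≤ m) m = L)
    (hL' : Nat.findGreatest (fun ℓ => (i' / 2 ^ ℓ + 1) * 2 ^ ℓ ≤ m) m = L) :
    i / 2 ^ L = i' / 2 ^ L := by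
  rcases lt_trichotomy (i / 2 ^ L) (i' / 2 ^ L) with h | h | h
  · exact absurd (dyadic_aux hi' hL hL' h) (not_false)
  · exact h
  · exact absurd (dyadic_aux hi hL' hL h) (not_false)

/-- key-rank lemma A -/
lemma key_lt_of_mem {β : Type} {Eb F : Set β} (hE : Eb.Finite) (p : β → β → Prop)
    (hF : F ⊆ Eb) (hdown : ∀ b b', b ∈ F → b' ∈ Eb → p b' b → b' ∈ F)
    {b : β} (hb : b ∈ F) (hrefl : p b b) :
    {b' ∈ Eb | p b' b ∧ ¬ p b b'}.ncard < F.ncard := by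
  have hS : {b' ∈ Eb | p b' b ∧ ¬ p b b'} ⊆ F \ {b} := by
    rintro b' ⟨h1, h2, h3⟩
    exact ⟨hdown b b' hb h1 h2, fun he => h3 (by rwa [Set.mem_singleton_iff.mp he])⟩
  calc {b' ∈ Eb | p b' b ∧ ¬ p b b'}.ncard ≤ (F \ {b}).ncard :=
        Set.ncard_le_ncard hS ((hE.subset hF).subset Set.diff_subset)
  _ < F.ncard := Set.ncard_diff_singleton_lt_of_mem hb (hE.subset hF)

/-- key-rank lemma B -/
lemma mem_of_key_lt {β : Type} {Eb F : Set β} (hE : Eb.Finite) (p : β → β → Prop)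
    (hF : F ⊆ Eb) (hdown : ∀ b b', b ∈ F → b' ∈ Eb → p b' b → b' ∈ F)
    (htot : ∀ b b', p b b' ∨ p b' b)
    {b : β} (hb : b ∈ Eb) (hkey : {b' ∈ Eb | p b' b ∧ ¬ p b b'}.ncard < F.ncard) :
    b ∈ F := by
  by_contra hbF
  have hsub : F ⊆ {b' ∈ Eb | p b' b ∧ ¬ p b b'} := by
    intro b' hb'
    have h1 : ¬ p b b' := fun h => hbF (hdown b' b hb' hb h)
    have h2 : p b' b := (htot b b').resolve_left h1
    exact ⟨hF hb', h2, h1⟩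
  have := Set.ncard_le_ncard hsub (hE.subset (Set.sep_subset _ _))
  omega

lemma one_le_log_of_two_le {x : ℝ} (hx : (2:ℝ) ≤ x) : 1 ≤ Real.log (x + 1) := by
  have he : Real.exp 1 ≤ 3 := le_trans Real.exp_one_lt_d9.le (by norm_num)
  rw [Real.le_log_iff_exp_le (by linarith)]
  linarith

lemma two_le_projDelta {r : ℕ} (hr : 2 ≤ r) {B : Fin r → Type} {A : Set (∀ i, B i)}
    (hfin : A.Finite) (hne : A.Nonempty) : 2 ≤ projDelta A := by
  have h1 : ∀ j, 1 ≤ ((fun x => x j) '' A).ncard := fun j =>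
    (Set.ncard_pos (hfin.image _)).2 (hne.image _)
  calc 2 ≤ r := hr
  _ = ∑ _i : Fin r, 1 := by simp
  _ ≤ projDelta A := Finset.sum_le_sum fun i _ => Finset.one_le_prod' fun j _ => h1 j


example (k s : ℕ) (hk : 2 ≤ k) : True := trivial

lemma base_body (k s : ℕ) (hk : 2 ≤ k) (B : Fin 1 → Type) (A : Set (∀ i, B i))
    (hfin : A.Finite) (hfree : KkFree A k) :
    (A.ncard : ℝ) ≤ (k : ℝ) * projDelta A * Real.log (projDelta A + 1) ^ (s * (1 - 1)) := by
  classical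
  have hδ : projDelta A = 1 := by
    simp [projDelta]
  have hcard : A.ncard ≤ k - 1 := by
    by_contra hc
    push_neg at hc
    apply hfree
    have hkcard : k ≤ A.ncard := by omega
    have hinj : Function.Injective (fun x : ∀ i : Fin 1, B i => x 0) := by
      intro a b hab
      funext i
      rw [Subsingleton.elim i 0]
      exact hab
    set AF := hfin.toFinset with hAFdef
    have hAFcard : AF.card = A.ncard := (Set.ncard_eq_toFinset_card A hfin).symm
    set F : Finset (B 0) := AF.image (fun x => x 0) with hFdef
    have hFcard : F.card = AF.card :=
      Finset.card_image_of_injective AF hinj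
    have hex : ∃ T ⊆ F, T.card = k :=
      Finset.exists_subset_card_eq (by omega)
    obtain ⟨T, hTsub, hTcard⟩ := hex
    refine ⟨fun i => Fin.cases T (fun j => j.elim0) i, fun i => ?_, ?_⟩
    · rw [Subsingleton.elim i 0]
      exact hTcard
    · intro x hx
      have h0 : x 0 ∈ T := hx 0
      obtain ⟨a, haAF, hax⟩ := Finset.mem_image.mp (hTsub h0)
      have hxa : x = a := by
        funext i
        rw [Subsingleton.elim i 0]
        exact hax.symm
      rw [hxa]
      exact hfin.mem_toFinset.mp haAF
  rw [hδ]
  have h1 : (A.ncard : ℝ) ≤ (k : ℝ) := by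
    have : A.ncard ≤ k := le_trans hcard (by omega)
    exact_mod_cast this
  simp only [Nat.sub_self, Nat.mul_zero, pow_zero, Nat.cast_one, mul_one]
  exact h1

set_option maxHeartbeats 1000000 in
lemma step_case (k s r : ℕ) (hk : 2 ≤ k) (hr : 1 ≤ r)
    (IH : ∃ α : ℝ, 0 ≤ α ∧ ∀ (B : Fin r → Type) (A : Set (∀ i, B i)), A.Finite →
        (∃ D : Fin s → Set (∀ i, B i), (∀ t, IsTpoDownset (D t)) ∧ A = ⋂ t, D t) →
        KkFree A k →
        (A.ncard : ℝ) ≤ α * projDelta A * Real.log (projDelta A + 1) ^ (s * (r - 1))) :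
    ∃ α : ℝ, 0 ≤ α ∧ ∀ (B : Fin (r+1) → Type) (A : Set (∀ i, B i)), A.Finite →
      (∃ D : Fin s → Set (∀ i, B i), (∀ t, IsTpoDownset (D t)) ∧ A = ⋂ t, D t) →
      KkFree A k →
      (A.ncard : ℝ) ≤ α * projDelta A * Real.log (projDelta A + 1) ^ (s * (r + 1 - 1)) := by
  classical
  obtain ⟨α₁, hα₁0, hIH⟩ := IH
  have hlog2 : 0 < Real.log 2 := Real.log_pos (by norm_num)
  set c₀ : ℝ := (Real.log 2)⁻¹ + 1 with hc₀
  have hc₀0 : 0 ≤ c₀ := by positivity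
  refine ⟨c₀ ^ s * (α₁ + k), by positivity, ?_⟩
  intro B A hfin hDex hfree
  simp only [Nat.add_sub_cancel]
  obtain ⟨D, hDtpo, hAD⟩ := hDex
  rcases A.eq_empty_or_nonempty with hAe | hAne
  · rw [hAe]
    simp only [Set.ncard_empty, Nat.cast_zero]
    have h1 : (0:ℝ) ≤ (projDelta (∅ : Set (∀ i, B i)) : ℝ) := Nat.cast_nonneg _
    have h2 : (0:ℝ) ≤ Real.log ((projDelta (∅ : Set (∀ i, B i)) : ℝ) + 1) :=
      Real.log_nonneg (by linarith)
    positivity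
  choose P hP using hDtpo
  have hPrefl : ∀ t i b, P t i b b := fun t => (hP t).1
  have hPtot : ∀ t i b b', P t i b b' ∨ P t i b' b := fun t => (hP t).2.1
  have hPdown : ∀ t x y, (∀ i, P t i (y i) (x i)) → x ∈ D t → y ∈ D t := fun t => (hP t).2.2
  set E : ∀ j : Fin (r+1), Set (B j) := fun j => (fun x => x j) '' A with hE
  have hEfin : ∀ j, (E j).Finite := fun j => hfin.image _
  set n : Fin (r+1) → ℕ := fun j => (E j).ncard with hn
  have hn1 : ∀ j, 1 ≤ n j := fun j => (Set.ncard_pos (hEfin j)).2 (hAne.image _)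
  set δ : ℕ := projDelta A with hδdef
  have hδeq : δ = ∑ i : Fin (r+1), ∏ j ∈ Finset.univ.erase i, n j := rfl
  have hδ2 : 2 ≤ δ := two_le_projDelta (by omega) hfin hAne
  set key : Fin s → B (Fin.last r) → ℕ :=
    fun t b => {b' ∈ E (Fin.last r) | P t (Fin.last r) b' b ∧ ¬ P t (Fin.last r) b b'}.ncard with hkey
  set m : Fin s → ((i : Fin r) → B (Fin.castSucc i)) → ℕ :=
    fun t y => {b ∈ E (Fin.last r) | Fin.snoc y b ∈ D t}.ncard with hm
  have hFdown : ∀ t (y : (i : Fin r) → B (Fin.castSucc i)), ∀ b b',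
      b ∈ {b ∈ E (Fin.last r) | Fin.snoc y b ∈ D t} → b' ∈ E (Fin.last r) → P t (Fin.last r) b' b →
      b' ∈ {b ∈ E (Fin.last r) | Fin.snoc y b ∈ D t} := by
    intro t y b b' hb hb' hpb
    refine ⟨hb', hPdown t (Fin.snoc y b) (Fin.snoc y b') ?_ hb.2⟩
    intro i
    induction i using Fin.lastCases with
    | last => simpa only [Fin.snoc_last] using hpb
    | cast i => simp only [Fin.snoc_castSucc]; exact hPrefl t _ _
  have hmemD : ∀ x ∈ A, ∀ t, x ∈ D t := by
    intro x hx t; rw [hAD] at hx; exact Set.mem_iInter.mp hx t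
  have hmsub : ∀ t y, m t y ≤ n (Fin.last r) :=
    fun t y => Set.ncard_le_ncard (Set.sep_subset _ _) (hEfin (Fin.last r))
  have h1 : ∀ x ∈ A, ∀ t, key t (x (Fin.last r)) < m t (Fin.init x) := by
    intro x hx t
    refine key_lt_of_mem (hEfin (Fin.last r)) (P t (Fin.last r)) (Set.sep_subset _ _) (hFdown t _) ?_ (hPrefl t (Fin.last r) _)
    refine ⟨⟨x, hx, rfl⟩, ?_⟩
    rw [Fin.snoc_init_self]
    exact hmemD x hx t
  set L : (∀ j, B j) → Fin s → ℕ := fun x t =>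
    Nat.findGreatest (fun ℓ => (key t (x (Fin.last r)) / 2 ^ ℓ + 1) * 2 ^ ℓ ≤ m t (Fin.init x))
      (m t (Fin.init x)) with hL
  set Φ : (∀ j, B j) → (Fin s → ℕ) × (Fin s → ℕ) :=
    fun x => (L x, fun t => key t (x (Fin.last r)) / 2 ^ (L x t)) with hΦ
  have h2 : ∀ x ∈ A, ∀ t, (key t (x (Fin.last r)) / 2 ^ (L x t) + 1) * 2 ^ (L x t) ≤ m t (Fin.init x) := by
    intro x hx t
    have h0 : (key t (x (Fin.last r)) / 2 ^ 0 + 1) * 2 ^ 0 ≤ m t (Fin.init x) := by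
      simpa using h1 x hx t
    exact Nat.findGreatest_spec
      (P := fun ℓ => (key t (x (Fin.last r)) / 2 ^ ℓ + 1) * 2 ^ ℓ ≤ m t (Fin.init x)) (Nat.zero_le _) h0
  have h4 : ∀ (lam q : Fin s → ℕ) (b : B (Fin.last r)) (y : (i : Fin r) → B (Fin.castSucc i)),
      b ∈ E (Fin.last r) → (∀ t, key t b / 2 ^ lam t = q t) →
      (∀ t, (q t + 1) * 2 ^ lam t ≤ m t y) → Fin.snoc y b ∈ A := by
    intro lam q b y hbE hq hY
    rw [hAD, Set.mem_iInter]
    intro t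
    have hkb : key t b < m t y := by
      have h5 : key t b < (key t b / 2 ^ lam t + 1) * 2 ^ lam t :=
        nat_lt_div_succ_mul _ _ (by positivity)
      rw [hq t] at h5
      exact lt_of_lt_of_le h5 (hY t)
    exact (mem_of_key_lt (hEfin (Fin.last r)) (P t (Fin.last r)) (Set.sep_subset _ _) (hFdown t y)
      (hPtot t (Fin.last r)) hbE hkb).2
  set Bsub : Fin r → Type := fun i => ↥(E (Fin.castSucc i)) with hBsub
  haveI hBsubfin : ∀ i, Finite (Bsub i) := fun i => (hEfin _).to_subtype
  haveI hBsubne : ∀ i, Nonempty (Bsub i) := fun i => ((hAne.image _).to_subtype)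
  set coef : (∀ i, Bsub i) → ((i : Fin r) → B (Fin.castSucc i)) :=
    fun y i => (y i : B (Fin.castSucc i)) with hcoef
  set A' : (Fin s → ℕ) × (Fin s → ℕ) → Set (∀ i, Bsub i) :=
    fun p => {y | ∀ t, (p.2 t + 1) * 2 ^ (p.1 t) ≤ m t (coef y)} with hA'
  have hA'fin : ∀ p, (A' p).Finite := fun p => Set.toFinite _
  have hA'down : ∀ p, ∃ D' : Fin s → Set (∀ i, Bsub i),
      (∀ t, IsTpoDownset (D' t)) ∧ A' p = ⋂ t, D' t := by
    intro p
    refine ⟨fun t => {y | (p.2 t + 1) * 2 ^ (p.1 t) ≤ m t (coef y)}, ?_, ?_⟩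
    · intro t
      refine ⟨fun i a b => P t (Fin.castSucc i) (a : B (Fin.castSucc i)) (b : B (Fin.castSucc i)),
        fun i b => hPrefl t _ _, fun i a b => hPtot t _ _ _, ?_⟩
      intro y y' hyy' hy
      simp only [Set.mem_setOf_eq] at hy ⊢
      refine le_trans hy ?_
      simp only [hm]
      apply Set.ncard_le_ncard ?_ ((hEfin (Fin.last r)).subset (Set.sep_subset _ _))
      intro b hb
      refine ⟨hb.1, hPdown t (Fin.snoc (coef y) b) (Fin.snoc (coef y') b) ?_ hb.2⟩
      intro i
      induction i using Fin.lastCases with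
      | last => simp only [Fin.snoc_last]; exact hPrefl t _ _
      | cast i => simp only [Fin.snoc_castSucc]; exact hyy' i
    · ext y
      simp only [hA', Set.mem_setOf_eq, Set.mem_iInter]
  set EFl : Finset (B (Fin.last r)) := (hEfin (Fin.last r)).toFinset with hEFl
  set QF : (Fin s → ℕ) × (Fin s → ℕ) → Finset (B (Fin.last r)) :=
    fun p => EFl.filter (fun b => ∀ t, key t b / 2 ^ (p.1 t) = p.2 t) with hQF
  have hA'free : ∀ p, k ≤ (QF p).card → KkFree (A' p) k := by
    intro p hpk hgrid
    obtain ⟨C', hC'card, hC'grid⟩ := hgrid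
    have hex : ∃ T ⊆ QF p, T.card = k := Finset.exists_subset_card_eq hpk
    obtain ⟨Qk, hQksub, hQkcard⟩ := hex
    apply hfree
    refine ⟨fun j => Fin.lastCases Qk
      (fun i => (C' i).map ⟨Subtype.val, Subtype.val_injective⟩) j, ?_, ?_⟩
    · intro j
      induction j using Fin.lastCases with
      | last => simpa using hQkcard
      | cast i => simpa using hC'card i
    · intro x hx
      have hxl : x (Fin.last r) ∈ Qk := by
        have hh := hx (Fin.last r)
        simpa using hh
      have hmemE : ∀ i : Fin r, x (Fin.castSucc i) ∈ E (Fin.castSucc i) := by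
        intro i
        have hh := hx (Fin.castSucc i)
        simp only [Fin.lastCases_castSucc] at hh
        obtain ⟨a, _, hav⟩ := Finset.mem_map.mp hh
        rw [← hav]
        exact a.2
      have hy'grid : ∀ i, (⟨x (Fin.castSucc i), hmemE i⟩ : Bsub i) ∈ C' i := by
        intro i
        have hh := hx (Fin.castSucc i)
        simp only [Fin.lastCases_castSucc] at hh
        obtain ⟨a, haC, hav⟩ := Finset.mem_map.mp hh
        have : (⟨x (Fin.castSucc i), hmemE i⟩ : Bsub i) = a := Subtype.ext (by exact hav.symm)
        rw [this]
        exact haC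
      have hy'A : (fun i => (⟨x (Fin.castSucc i), hmemE i⟩ : Bsub i)) ∈ A' p :=
        hC'grid _ hy'grid
      have hxQ : x (Fin.last r) ∈ QF p := hQksub hxl
      rw [hQF, Finset.mem_filter] at hxQ
      have hcf : coef (fun i => (⟨x (Fin.castSucc i), hmemE i⟩ : Bsub i)) = Fin.init x :=
        funext fun i => rfl
      have hres := h4 p.1 p.2 (x (Fin.last r)) (Fin.init x) ((hEfin (Fin.last r)).mem_toFinset.mp hxQ.1) hxQ.2
        (by rw [← hcf]; exact hy'A)
      rwa [Fin.snoc_init_self] at hres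
  set Δ' : ℕ := ∑ i : Fin r, ∏ j ∈ Finset.univ.erase i, n (Fin.castSucc j) with hΔ'
  have hprojsub : ∀ p, projDelta (A' p) ≤ Δ' := by
    intro p
    refine Finset.sum_le_sum fun i _ => Finset.prod_le_prod' fun j _ => ?_
    calc ((fun y => y j) '' A' p).ncard ≤ (Set.univ : Set (Bsub j)).ncard :=
          Set.ncard_le_ncard (Set.subset_univ _) Set.finite_univ
    _ = Nat.card (Bsub j) := Set.ncard_univ _
    _ = n (Fin.castSucc j) := Nat.card_coe_set_eq _
  have hsplit : ∀ i : Fin r, n (Fin.last r) * ∏ j ∈ Finset.univ.erase i, n (Fin.castSucc j)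
      = ∏ j ∈ Finset.univ.erase (Fin.castSucc i), n j := by
    intro i
    have h1 : (∏ j ∈ Finset.univ.erase (Fin.castSucc i), n j) * n (Fin.castSucc i)
        = ∏ j : Fin (r+1), n j := Finset.prod_erase_mul _ _ (Finset.mem_univ _)
    have h2 : (∏ j ∈ Finset.univ.erase i, n (Fin.castSucc j)) * n (Fin.castSucc i)
        = ∏ j : Fin r, n (Fin.castSucc j) :=
      Finset.prod_erase_mul _ _ (Finset.mem_univ _)
    have h3 : ∏ j : Fin (r+1), n j = (∏ j : Fin r, n (Fin.castSucc j)) * n (Fin.last r) :=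
      Fin.prod_univ_castSucc n
    apply Nat.eq_of_mul_eq_mul_right (Nat.lt_of_lt_of_le Nat.zero_lt_one (hn1 (Fin.castSucc i)))
    calc n (Fin.last r) * (∏ j ∈ Finset.univ.erase i, n (Fin.castSucc j)) * n (Fin.castSucc i)
        = ((∏ j ∈ Finset.univ.erase i, n (Fin.castSucc j)) * n (Fin.castSucc i))
          * n (Fin.last r) := by ring
    _ = (∏ j : Fin r, n (Fin.castSucc j)) * n (Fin.last r) := by rw [h2]
    _ = ∏ j : Fin (r+1), n j := h3.symm
    _ = (∏ j ∈ Finset.univ.erase (Fin.castSucc i), n j) * n (Fin.castSucc i) := h1.symm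
  have hND : n (Fin.last r) * Δ' ≤ δ := by
    rw [hΔ', Finset.mul_sum, hδeq]
    calc ∑ i : Fin r, n (Fin.last r) * ∏ j ∈ Finset.univ.erase i, n (Fin.castSucc j)
        = ∑ i : Fin r, ∏ j ∈ Finset.univ.erase (Fin.castSucc i), n j :=
          Finset.sum_congr rfl fun i _ => hsplit i
    _ ≤ ∑ i : Fin (r+1), ∏ j ∈ Finset.univ.erase i, n j := by
        rw [Fin.sum_univ_castSucc (f := fun i : Fin (r+1) => ∏ j ∈ Finset.univ.erase i, n j)]
        exact Nat.le_add_right _ _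
  have hΔδ : Δ' ≤ δ := le_trans (Nat.le_mul_of_pos_left _ (hn1 (Fin.last r))) hND
  have hPinitδ : ∏ i : Fin r, n (Fin.castSucc i) ≤ δ := by
    have h1 : (∏ j ∈ Finset.univ.erase (Fin.last r), n j) * n (Fin.last r) = ∏ j, n j :=
      Finset.prod_erase_mul _ _ (Finset.mem_univ _)
    have h2 : ∏ i : Fin r, n (Fin.castSucc i) = ∏ j ∈ Finset.univ.erase (Fin.last r), n j :=
      Nat.eq_of_mul_eq_mul_right (Nat.lt_of_lt_of_le Nat.zero_lt_one (hn1 (Fin.last r)))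
        ((Fin.prod_univ_castSucc n).symm.trans h1.symm)
    rw [h2, hδeq]
    exact Finset.single_le_sum (f := fun i => ∏ j ∈ Finset.univ.erase i, n j)
      (fun i _ => Nat.zero_le _) (Finset.mem_univ (Fin.last r))
  have hlst0 : (Fin.last r) ≠ (0 : Fin (r+1)) := by
    intro hcon
    have := congrArg Fin.val hcon
    simp only [Fin.val_last, Fin.val_zero] at this
    omega
  have hnlstδ : n (Fin.last r) ≤ δ := by
    calc n (Fin.last r) ≤ ∏ j ∈ Finset.univ.erase (0 : Fin (r+1)), n j :=
          Finset.single_le_prod' (fun j _ => hn1 j)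
            (Finset.mem_erase.mpr ⟨hlst0, Finset.mem_univ _⟩)
    _ ≤ δ := by
        rw [hδeq]
        exact Finset.single_le_sum (f := fun i => ∏ j ∈ Finset.univ.erase i, n j)
          (fun i _ => Nat.zero_le _) (Finset.mem_univ 0)
  have hδR : (2:ℝ) ≤ (δ : ℝ) := by exact_mod_cast hδ2
  have hlog1 : 1 ≤ Real.log ((δ:ℝ) + 1) := one_le_log_of_two_le hδR
  have hlog0 : 0 ≤ Real.log ((δ:ℝ) + 1) := by linarith
  set γ : ℕ := s * (r - 1) with hγ
  have hA'card : ∀ p, k ≤ (QF p).card →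
      ((A' p).ncard : ℝ) ≤ α₁ * Δ' * Real.log ((δ:ℝ) + 1) ^ γ := by
    intro p hk'
    have hb := hIH Bsub (A' p) (hA'fin p) (hA'down p) (hA'free p hk')
    refine le_trans hb ?_
    have hpδ : projDelta (A' p) ≤ δ := le_trans (hprojsub p) hΔδ
    have hp1 : ((projDelta (A' p) : ℕ) : ℝ) ≤ (Δ' : ℝ) := by exact_mod_cast hprojsub p
    have hp2 : ((projDelta (A' p) : ℕ) : ℝ) + 1 ≤ (δ:ℝ) + 1 := by
      have : ((projDelta (A' p) : ℕ) : ℝ) ≤ (δ:ℝ) := by exact_mod_cast hpδ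
      linarith
    gcongr
    have hcn : (0:ℝ) ≤ ((projDelta (A' p) : ℕ) : ℝ) := Nat.cast_nonneg _
    · exact pow_nonneg (Real.log_nonneg (by linarith)) γ
    · exact Real.log_nonneg (by linarith [Nat.cast_nonneg (α := ℝ) (projDelta (A' p))])
  set gy : (∀ j, B j) → ∀ i, Bsub i := fun x i =>
    if h : x (Fin.castSucc i) ∈ E (Fin.castSucc i) then ⟨x (Fin.castSucc i), h⟩
    else Classical.arbitrary _ with hgy
  have hgyval : ∀ x ∈ A, ∀ i, ((gy x i : B (Fin.castSucc i))) = x (Fin.castSucc i) := by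
    intro x hx i
    have hmem : x (Fin.castSucc i) ∈ E (Fin.castSucc i) := ⟨x, hx, rfl⟩
    have hval : gy x i = ⟨x (Fin.castSucc i), hmem⟩ := by
      simp only [hgy]
      exact dif_pos hmem
    rw [hval]
  have hgycoef : ∀ x ∈ A, coef (gy x) = Fin.init x := fun x hx =>
    funext fun i => hgyval x hx i
  set AF : Finset (∀ j, B j) := hfin.toFinset with hAF
  set fib : (Fin s → ℕ) × (Fin s → ℕ) → Finset (∀ j, B j) :=
    fun p => AF.filter (fun x => Φ x = p) with hfib
  set I : Finset ((Fin s → ℕ) × (Fin s → ℕ)) := AF.image Φ with hI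
  have hmemAF : ∀ x, x ∈ AF ↔ x ∈ A := fun x => hfin.mem_toFinset
  have hcount : AF.card = ∑ p ∈ I, (fib p).card := Finset.card_eq_sum_card_image Φ AF
  have hfibmem : ∀ p, ∀ x ∈ fib p, x ∈ A ∧ Φ x = p := by
    intro p x hx
    rw [hfib, Finset.mem_filter] at hx
    exact ⟨(hmemAF x).mp hx.1, hx.2⟩
  have hfibQ : ∀ p, ∀ x ∈ fib p, x (Fin.last r) ∈ QF p := by
    intro p x hx
    obtain ⟨hxA, hΦx⟩ := hfibmem p x hx
    rw [hQF, Finset.mem_filter]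
    refine ⟨(hEfin _).mem_toFinset.mpr ⟨x, hxA, rfl⟩, ?_⟩
    intro t
    rw [← hΦx]
  have hfibA' : ∀ p, ∀ x ∈ fib p, gy x ∈ A' p := by
    intro p x hx
    obtain ⟨hxA, hΦx⟩ := hfibmem p x hx
    rw [hA']
    intro t
    rw [hgycoef x hxA, ← hΦx]
    exact h2 x hxA t
  have hbigfib : ∀ p, (fib p).card ≤ (QF p).card * (A' p).ncard := by
    intro p
    have hinj : Set.InjOn (fun x => (x (Fin.last r), gy x)) ↑(fib p) := by
      intro x hx x' hx' he
      obtain ⟨hxA, _⟩ := hfibmem p x hx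
      obtain ⟨hx'A, _⟩ := hfibmem p x' hx'
      have he1 : x (Fin.last r) = x' (Fin.last r) := congrArg Prod.fst he
      have he2 : Fin.init x = Fin.init x' := by
        rw [← hgycoef x hxA, ← hgycoef x' hx'A]
        exact congrArg coef (congrArg Prod.snd he)
      calc x = Fin.snoc (Fin.init x) (x (Fin.last r)) := (Fin.snoc_init_self x).symm
      _ = Fin.snoc (Fin.init x') (x' (Fin.last r)) := by rw [he1, he2]
      _ = x' := Fin.snoc_init_self x'
    have hmap : ∀ x ∈ fib p, (x (Fin.last r), gy x) ∈ (QF p) ×ˢ (hA'fin p).toFinset := by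
      intro x hx
      rw [Finset.mem_product]
      exact ⟨hfibQ p x hx, (hA'fin p).mem_toFinset.mpr (hfibA' p x hx)⟩
    calc (fib p).card ≤ ((QF p) ×ˢ (hA'fin p).toFinset).card :=
          Finset.card_le_card_of_injOn _ hmap hinj
    _ = (QF p).card * (A' p).ncard := by
        rw [Finset.card_product, Set.ncard_eq_toFinset_card _ (hA'fin p)]
  have hsmallfib : ∀ p, (fib p).card ≤ (QF p).card * ((fib p).image Fin.init).card := by
    intro p
    have hinj : Set.InjOn (fun x : ∀ j, B j => (x (Fin.last r), Fin.init x)) ↑(fib p) := by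
      intro x hx x' hx' he
      have he1 : x (Fin.last r) = x' (Fin.last r) := congrArg Prod.fst he
      have he2 : Fin.init x = Fin.init x' := congrArg Prod.snd he
      calc x = Fin.snoc (Fin.init x) (x (Fin.last r)) := (Fin.snoc_init_self x).symm
      _ = Fin.snoc (Fin.init x') (x' (Fin.last r)) := by rw [he1, he2]
      _ = x' := Fin.snoc_init_self x'
    have hmap : ∀ x ∈ fib p, (x (Fin.last r), Fin.init x) ∈ (QF p) ×ˢ ((fib p).image Fin.init) := by
      intro x hx
      rw [Finset.mem_product]
      exact ⟨hfibQ p x hx, Finset.mem_image_of_mem _ hx⟩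
    calc (fib p).card ≤ ((QF p) ×ˢ ((fib p).image Fin.init)).card :=
          Finset.card_le_card_of_injOn _ hmap hinj
    _ = _ := Finset.card_product _ _
  have hQdisj : ∀ (lam : Fin s → ℕ) (p p' : (Fin s → ℕ) × (Fin s → ℕ)), p.1 = lam →
      p'.1 = lam → p ≠ p' → Disjoint (QF p) (QF p') := by
    intro lam p p' hp hp' hne
    rw [Finset.disjoint_left]
    intro b hb hb'
    rw [hQF, Finset.mem_filter] at hb hb'
    apply hne
    apply Prod.ext (hp.trans hp'.symm)
    funext t
    rw [← hb.2 t, ← hb'.2 t, hp, hp']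
  have hIdisj : ∀ (lam : Fin s → ℕ) (p p' : (Fin s → ℕ) × (Fin s → ℕ)), p.1 = lam → p'.1 = lam →
      ∀ x ∈ fib p, ∀ x' ∈ fib p', Fin.init x = Fin.init x' → p = p' := by
    intro lam p p' hp hp' x hx x' hx' hinit
    obtain ⟨hxA, hΦx⟩ := hfibmem p x hx
    obtain ⟨hx'A, hΦx'⟩ := hfibmem p' x' hx'
    have hLx : L x = lam := by rw [← hp, ← hΦx]
    have hLx' : L x' = lam := by rw [← hp', ← hΦx']
    apply Prod.ext (hp.trans hp'.symm)
    funext t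
    have hkx : key t (x (Fin.last r)) < m t (Fin.init x) := h1 x hxA t
    have hkx' : key t (x' (Fin.last r)) < m t (Fin.init x) := by
      rw [hinit]
      exact h1 x' hx'A t
    have hgx : Nat.findGreatest
        (fun ℓ => (key t (x (Fin.last r)) / 2 ^ ℓ + 1) * 2 ^ ℓ ≤ m t (Fin.init x))
        (m t (Fin.init x)) = lam t := by
      rw [← congrFun hLx t]
    have hgx' : Nat.findGreatest
        (fun ℓ => (key t (x' (Fin.last r)) / 2 ^ ℓ + 1) * 2 ^ ℓ ≤ m t (Fin.init x))
        (m t (Fin.init x)) = lam t := by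
      rw [hinit, ← congrFun hLx' t]
    have e1 : p.2 t = key t (x (Fin.last r)) / 2 ^ (lam t) := by
      rw [← hΦx]
      show key t (x (Fin.last r)) / 2 ^ (L x t) = _
      rw [congrFun hLx t]
    have e2 : p'.2 t = key t (x' (Fin.last r)) / 2 ^ (lam t) := by
      rw [← hΦx']
      show key t (x' (Fin.last r)) / 2 ^ (L x' t) = _
      rw [congrFun hLx' t]
    rw [e1, e2]
    exact dyadic_unique hkx hkx' hgx hgx'
  haveI hfty : ∀ i, Fintype (Bsub i) := fun i => Fintype.ofFinite _
  have hImgInit : ((AF.image Fin.init)).card ≤ ∏ i : Fin r, n (Fin.castSucc i) := by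
    set gy2 : ((i : Fin r) → B (Fin.castSucc i)) → ∀ i, Bsub i := fun y i =>
      if h : y i ∈ E (Fin.castSucc i) then ⟨y i, h⟩ else Classical.arbitrary _ with hgy2
    have hmemE2 : ∀ y ∈ AF.image Fin.init, ∀ i, y i ∈ E (Fin.castSucc i) := by
      intro y hy i
      rw [Finset.mem_image] at hy
      obtain ⟨x, hxAF, rfl⟩ := hy
      exact ⟨x, (hmemAF x).mp hxAF, rfl⟩
    have hinj : Set.InjOn gy2 ↑(AF.image Fin.init) := by
      intro y hy y' hy' he
      funext i
      have e1 : ((gy2 y i : B (Fin.castSucc i))) = y i := by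
        have hval : gy2 y i = ⟨y i, hmemE2 y hy i⟩ := by
          simp only [hgy2]
          exact dif_pos (hmemE2 y hy i)
        rw [hval]
      have e2 : ((gy2 y' i : B (Fin.castSucc i))) = y' i := by
        have hval : gy2 y' i = ⟨y' i, hmemE2 y' hy' i⟩ := by
          simp only [hgy2]
          exact dif_pos (hmemE2 y' hy' i)
        rw [hval]
      rw [← e1, ← e2, he]
    calc (AF.image Fin.init).card ≤ (Finset.univ : Finset (∀ i, Bsub i)).card :=
          Finset.card_le_card_of_injOn gy2 (fun y _ => Finset.mem_univ _) hinj
    _ = ∏ i : Fin r, n (Fin.castSucc i) := by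
        rw [Finset.card_univ, Fintype.card_pi]
        refine Finset.prod_congr rfl fun i _ => ?_
        rw [← Nat.card_eq_fintype_card]
        exact Nat.card_coe_set_eq _
  have hsumQ : ∀ lam : Fin s → ℕ,
      ∑ p ∈ I.filter (fun p => p.1 = lam), (QF p).card ≤ n (Fin.last r) := by
    intro lam
    have hd : ∀ p ∈ I.filter (fun p => p.1 = lam), ∀ p' ∈ I.filter (fun p => p.1 = lam),
        p ≠ p' → Disjoint (QF p) (QF p') := by
      intro p hp p' hp' hne
      exact hQdisj lam p p' (Finset.mem_filter.mp hp).2 (Finset.mem_filter.mp hp').2 hne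
    calc ∑ p ∈ I.filter (fun p => p.1 = lam), (QF p).card
        = ((I.filter (fun p => p.1 = lam)).biUnion QF).card := (Finset.card_biUnion hd).symm
    _ ≤ EFl.card := by
        apply Finset.card_le_card
        intro b hb
        rw [Finset.mem_biUnion] at hb
        obtain ⟨p, _, hbp⟩ := hb
        rw [hQF, Finset.mem_filter] at hbp
        exact hbp.1
    _ = n (Fin.last r) := by
        rw [hEFl]
        exact (Set.ncard_eq_toFinset_card _ (hEfin _)).symm
  have hsumImg : ∀ lam : Fin s → ℕ,
      ∑ p ∈ I.filter (fun p => p.1 = lam), ((fib p).image Fin.init).card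
      ≤ ∏ i : Fin r, n (Fin.castSucc i) := by
    intro lam
    have hd : ∀ p ∈ I.filter (fun p => p.1 = lam), ∀ p' ∈ I.filter (fun p => p.1 = lam),
        p ≠ p' → Disjoint ((fib p).image Fin.init) ((fib p').image Fin.init) := by
      intro p hp p' hp' hne
      rw [Finset.disjoint_left]
      intro y hy hy'
      rw [Finset.mem_image] at hy hy'
      obtain ⟨x, hx, hxy⟩ := hy
      obtain ⟨x', hx', hx'y⟩ := hy'
      exact hne (hIdisj lam p p' (Finset.mem_filter.mp hp).2 (Finset.mem_filter.mp hp').2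
        x hx x' hx' (hxy.trans hx'y.symm))
    calc ∑ p ∈ I.filter (fun p => p.1 = lam), ((fib p).image Fin.init).card
        = ((I.filter (fun p => p.1 = lam)).biUnion (fun p => (fib p).image Fin.init)).card :=
          (Finset.card_biUnion hd).symm
    _ ≤ (AF.image Fin.init).card := by
        apply Finset.card_le_card
        intro y hy
        rw [Finset.mem_biUnion] at hy
        obtain ⟨p, _, hyp⟩ := hy
        exact Finset.image_subset_image (Finset.filter_subset _ _) hyp
    _ ≤ ∏ i : Fin r, n (Fin.castSucc i) := hImgInit
  have hlogpow1 : (1:ℝ) ≤ Real.log ((δ:ℝ)+1) ^ γ := one_le_pow₀ hlog1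
  have hlambound : ∀ lam : Fin s → ℕ,
      (∑ p ∈ I.filter (fun p => p.1 = lam), ((fib p).card : ℝ))
      ≤ (α₁ + k) * δ * Real.log ((δ:ℝ)+1) ^ γ := by
    intro lam
    have hsplit2 : I.filter (fun p => p.1 = lam)
        = (I.filter (fun p => p.1 = lam)).filter (fun p => k ≤ (QF p).card)
          ∪ (I.filter (fun p => p.1 = lam)).filter (fun p => ¬ k ≤ (QF p).card) :=
      (Finset.filter_union_filter_not_eq _ _).symm
    rw [hsplit2, Finset.sum_union (Finset.disjoint_filter_filter_not _ _ _)]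
    have hbigsum : ∑ p ∈ (I.filter (fun p => p.1 = lam)).filter (fun p => k ≤ (QF p).card),
        ((fib p).card : ℝ)
        ≤ (n (Fin.last r) : ℝ) * (α₁ * Δ' * Real.log ((δ:ℝ)+1) ^ γ) := by
      calc ∑ p ∈ (I.filter (fun p => p.1 = lam)).filter (fun p => k ≤ (QF p).card),
          ((fib p).card : ℝ)
          ≤ ∑ p ∈ (I.filter (fun p => p.1 = lam)).filter (fun p => k ≤ (QF p).card),
            ((QF p).card : ℝ) * (α₁ * Δ' * Real.log ((δ:ℝ)+1) ^ γ) := by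
            refine Finset.sum_le_sum fun p hp => ?_
            have hk' : k ≤ (QF p).card := (Finset.mem_filter.mp hp).2
            calc ((fib p).card : ℝ) ≤ ((QF p).card : ℝ) * ((A' p).ncard : ℝ) := by
                  exact_mod_cast hbigfib p
            _ ≤ ((QF p).card : ℝ) * (α₁ * Δ' * Real.log ((δ:ℝ)+1) ^ γ) :=
                  mul_le_mul_of_nonneg_left (hA'card p hk') (Nat.cast_nonneg _)
      _ = (∑ p ∈ (I.filter (fun p => p.1 = lam)).filter (fun p => k ≤ (QF p).card),
            ((QF p).card : ℝ)) * (α₁ * Δ' * Real.log ((δ:ℝ)+1) ^ γ) := by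
            rw [← Finset.sum_mul]
      _ ≤ (n (Fin.last r) : ℝ) * (α₁ * Δ' * Real.log ((δ:ℝ)+1) ^ γ) := by
            refine mul_le_mul_of_nonneg_right ?_ (by positivity)
            have h9 : ∑ p ∈ (I.filter (fun p => p.1 = lam)).filter (fun p => k ≤ (QF p).card),
                (QF p).card ≤ n (Fin.last r) :=
              le_trans (Finset.sum_le_sum_of_subset (Finset.filter_subset _ _)) (hsumQ lam)
            exact_mod_cast h9
    have hsmallsum : ∑ p ∈ (I.filter (fun p => p.1 = lam)).filter (fun p => ¬ k ≤ (QF p).card),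
        ((fib p).card : ℝ) ≤ (k:ℝ) * (∏ i : Fin r, n (Fin.castSucc i) : ℕ) := by
      calc ∑ p ∈ (I.filter (fun p => p.1 = lam)).filter (fun p => ¬ k ≤ (QF p).card),
          ((fib p).card : ℝ)
          ≤ ∑ p ∈ (I.filter (fun p => p.1 = lam)).filter (fun p => ¬ k ≤ (QF p).card),
            (k:ℝ) * (((fib p).image Fin.init).card : ℝ) := by
            refine Finset.sum_le_sum fun p hp => ?_
            have hk' : (QF p).card ≤ k := le_of_lt (Nat.lt_of_not_le (Finset.mem_filter.mp hp).2)
            have h6 : (fib p).card ≤ k * ((fib p).image Fin.init).card :=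
              le_trans (hsmallfib p) (Nat.mul_le_mul_right _ hk')
            exact_mod_cast h6
      _ = (k:ℝ) * ∑ p ∈ (I.filter (fun p => p.1 = lam)).filter (fun p => ¬ k ≤ (QF p).card),
            (((fib p).image Fin.init).card : ℝ) := by rw [Finset.mul_sum]
      _ ≤ (k:ℝ) * (∏ i : Fin r, n (Fin.castSucc i) : ℕ) := by
            refine mul_le_mul_of_nonneg_left ?_ (Nat.cast_nonneg _)
            have h9 : ∑ p ∈ (I.filter (fun p => p.1 = lam)).filter (fun p => ¬ k ≤ (QF p).card),
                ((fib p).image Fin.init).card ≤ ∏ i : Fin r, n (Fin.castSucc i) :=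
              le_trans (Finset.sum_le_sum_of_subset (Finset.filter_subset _ _)) (hsumImg lam)
            exact_mod_cast h9
    have hb1 : (n (Fin.last r) : ℝ) * (α₁ * Δ' * Real.log ((δ:ℝ)+1) ^ γ)
        ≤ α₁ * δ * Real.log ((δ:ℝ)+1) ^ γ := by
      have h10 : (n (Fin.last r) : ℝ) * (Δ' : ℝ) ≤ (δ : ℝ) := by exact_mod_cast hND
      calc (n (Fin.last r) : ℝ) * (α₁ * Δ' * Real.log ((δ:ℝ)+1) ^ γ)
          = (α₁ * Real.log ((δ:ℝ)+1) ^ γ) * ((n (Fin.last r) : ℝ) * (Δ' : ℝ)) := by ring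
      _ ≤ (α₁ * Real.log ((δ:ℝ)+1) ^ γ) * (δ : ℝ) := by
          refine mul_le_mul_of_nonneg_left h10 (by positivity)
      _ = α₁ * δ * Real.log ((δ:ℝ)+1) ^ γ := by ring
    have hb2 : (k:ℝ) * (∏ i : Fin r, n (Fin.castSucc i) : ℕ)
        ≤ (k:ℝ) * δ * Real.log ((δ:ℝ)+1) ^ γ := by
      have h10 : ((∏ i : Fin r, n (Fin.castSucc i) : ℕ) : ℝ) ≤ (δ : ℝ) := by
        exact_mod_cast hPinitδ
      calc (k:ℝ) * (∏ i : Fin r, n (Fin.castSucc i) : ℕ) ≤ (k:ℝ) * δ :=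
            mul_le_mul_of_nonneg_left h10 (Nat.cast_nonneg _)
      _ = (k:ℝ) * δ * 1 := (mul_one _).symm
      _ ≤ (k:ℝ) * δ * Real.log ((δ:ℝ)+1) ^ γ := by
            refine mul_le_mul_of_nonneg_left hlogpow1 (by positivity)
    have : (α₁ + k) * δ * Real.log ((δ:ℝ)+1) ^ γ
        = α₁ * δ * Real.log ((δ:ℝ)+1) ^ γ + (k:ℝ) * δ * Real.log ((δ:ℝ)+1) ^ γ := by ring
    rw [this]
    exact add_le_add (le_trans hbigsum hb1) (le_trans hsmallsum hb2)
  set L0 : ℕ := Nat.log 2 (n (Fin.last r)) with hL0def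
  have hΛsub : I.image Prod.fst ⊆ Fintype.piFinset (fun _ : Fin s => Finset.range (L0+1)) := by
    intro lam hlam
    rw [Finset.mem_image] at hlam
    obtain ⟨p, hpI, hplam⟩ := hlam
    rw [hI, Finset.mem_image] at hpI
    obtain ⟨x, hxAF, hΦx⟩ := hpI
    have hxA := (hmemAF x).mp hxAF
    rw [Fintype.mem_piFinset]
    intro t
    rw [Finset.mem_range]
    have hlamt : lam t = L x t := by rw [← hplam, ← hΦx]
    have hpow : 2 ^ (L x t) ≤ m t (Fin.init x) :=
      le_trans (Nat.le_mul_of_pos_left _ (Nat.succ_pos _)) (h2 x hxA t)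
    have hlt : L x t ≤ L0 := Nat.le_log_of_pow_le one_lt_two (le_trans hpow (hmsub t _))
    omega
  have hΛcard : (I.image Prod.fst).card ≤ (L0+1)^s := by
    refine le_trans (Finset.card_le_card hΛsub) ?_
    rw [Fintype.card_piFinset]
    simp [Finset.card_range]
  have htotal : (A.ncard : ℝ)
      ≤ ((I.image Prod.fst).card : ℝ) * ((α₁ + k) * δ * Real.log ((δ:ℝ)+1) ^ γ) := by
    have hAFcard : A.ncard = AF.card := Set.ncard_eq_toFinset_card A hfin
    rw [hAFcard, hcount]
    push_cast
    rw [← Finset.sum_fiberwise_of_maps_to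
      (fun p hp => Finset.mem_image_of_mem Prod.fst hp) (fun p => ((fib p).card : ℝ))]
    calc ∑ lam ∈ I.image Prod.fst, ∑ p ∈ I.filter (fun p => p.1 = lam), ((fib p).card : ℝ)
        ≤ ∑ _lam ∈ I.image Prod.fst, (α₁ + k) * δ * Real.log ((δ:ℝ)+1) ^ γ :=
          Finset.sum_le_sum fun lam _ => hlambound lam
    _ = ((I.image Prod.fst).card : ℝ) * ((α₁ + k) * δ * Real.log ((δ:ℝ)+1) ^ γ) := by
        rw [Finset.sum_const, nsmul_eq_mul]
  have hL0R : ((L0 + 1 : ℕ) : ℝ) ≤ c₀ * Real.log ((δ:ℝ)+1) := by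
    have hnne : n (Fin.last r) ≠ 0 := by have := hn1 (Fin.last r); omega
    have hpow : (2:ℕ) ^ L0 ≤ n (Fin.last r) := Nat.pow_log_le_self 2 hnne
    have hpowR : (2:ℝ) ^ L0 ≤ (n (Fin.last r) : ℝ) := by exact_mod_cast hpow
    have hlogn : (L0:ℝ) * Real.log 2 ≤ Real.log (n (Fin.last r)) := by
      rw [← Real.log_pow]
      exact Real.log_le_log (by positivity) hpowR
    have hnd : Real.log (n (Fin.last r)) ≤ Real.log ((δ:ℝ)+1) := by
      apply Real.log_le_log
      · have := hn1 (Fin.last r)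
        have : (1:ℝ) ≤ (n (Fin.last r) : ℝ) := by exact_mod_cast this
        linarith
      · have : (n (Fin.last r) : ℝ) ≤ (δ:ℝ) := by exact_mod_cast hnlstδ
        linarith
    have h8 : (L0:ℝ) ≤ Real.log ((δ:ℝ)+1) / Real.log 2 := by
      rw [le_div_iff₀ hlog2]
      linarith
    push_cast
    rw [hc₀]
    have h9 : Real.log ((δ:ℝ)+1) / Real.log 2 = (Real.log 2)⁻¹ * Real.log ((δ:ℝ)+1) := by ring
    rw [h9] at h8
    nlinarith [hlog1]
  have hexp : s + γ = s * r := by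
    have h10 : r - 1 + 1 = r := Nat.succ_pred_eq_of_pos hr
    calc s + γ = s * ((r-1) + 1) := by rw [hγ]; ring
    _ = s * r := by rw [h10]
  have hRnonneg : (0:ℝ) ≤ (α₁ + k) * δ * Real.log ((δ:ℝ)+1) ^ γ := by positivity
  calc (A.ncard : ℝ)
      ≤ ((I.image Prod.fst).card : ℝ) * ((α₁ + k) * δ * Real.log ((δ:ℝ)+1) ^ γ) := htotal
  _ ≤ ((L0+1:ℕ):ℝ)^s * ((α₁ + k) * δ * Real.log ((δ:ℝ)+1) ^ γ) := by
      refine mul_le_mul_of_nonneg_right ?_ hRnonneg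
      have : ((I.image Prod.fst).card : ℝ) ≤ (((L0+1)^s : ℕ) : ℝ) := by exact_mod_cast hΛcard
      refine le_trans this ?_
      push_cast
      exact le_refl _
  _ ≤ (c₀ * Real.log ((δ:ℝ)+1))^s * ((α₁ + k) * δ * Real.log ((δ:ℝ)+1) ^ γ) := by
      refine mul_le_mul_of_nonneg_right ?_ hRnonneg
      refine pow_le_pow_left₀ (Nat.cast_nonneg _) ?_ s
      exact hL0R
  _ = c₀^s * (α₁ + k) * δ * (Real.log ((δ:ℝ)+1) ^ s * Real.log ((δ:ℝ)+1) ^ γ) := by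
      rw [mul_pow]; ring
  _ = c₀^s * (α₁ + k) * δ * Real.log ((δ:ℝ)+1) ^ (s * r) := by rw [← pow_add, hexp]
theorem downset_bound (k s : ℕ) (hk : 2 ≤ k) :
    ∀ r : ℕ, 1 ≤ r → ∃ α : ℝ, 0 ≤ α ∧ ∀ (B : Fin r → Type) (A : Set (∀ i, B i)), A.Finite →
      (∃ D : Fin s → Set (∀ i, B i), (∀ t, IsTpoDownset (D t)) ∧ A = ⋂ t, D t) →
      KkFree A k →
      (A.ncard : ℝ) ≤ α * projDelta A * Real.log (projDelta A + 1) ^ (s * (r - 1)) := by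
  refine Nat.le_induction ?_ ?_
  · exact ⟨(k : ℝ), Nat.cast_nonneg k,
      fun B A hfin _ hfree => base_body k s hk B A hfin hfree⟩
  · intro r hr IH
    exact step_case k s r hk hr IH

/-- Zarankiewicz bound for finite `K_{k,…,k}`-free subsets of grid-complexity at most `s`
of an arbitrary `r`-grid, in terms of `δ^r_{r-1}` of the projections of `A`. -/
theorem zarankiewicz_bound_projections (r s k : ℕ) (hr : 2 ≤ r) (hk : 2 ≤ k) :
    ∃ α : ℝ, ∀ (B : Fin r → Type) (A : Set (∀ i, B i)), A.Finite →
      (∃ s' ≤ s, HasGridComplexity A s') → KkFree A k →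
      (A.ncard : ℝ) ≤ α * (projDelta A : ℝ) *
        Real.log ((projDelta A : ℝ) + 1) ^ (s * (2 ^ (r - 1) - 1)) := by
  classical
  have hr1 : 1 ≤ r := le_trans one_le_two hr
  choose αf hαf using fun s' => downset_bound k s' hk r hr1
  refine ⟨∑ s' ∈ Finset.range (s+1), αf s', ?_⟩
  intro B A hfin hgc hfree
  obtain ⟨s', hs', X, hbasic, hAX⟩ := hgc
  have hα0 : ∀ t, 0 ≤ αf t := fun t => (hαf t).1
  have hsum0 : 0 ≤ ∑ s'' ∈ Finset.range (s+1), αf s'' := Finset.sum_nonneg fun t _ => hα0 t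
  have hmem : αf s' ≤ ∑ s'' ∈ Finset.range (s+1), αf s'' :=
    Finset.single_le_sum (fun t _ => hα0 t) (Finset.mem_range.mpr (by omega))
  rcases A.eq_empty_or_nonempty with hAe | hAne
  · rw [hAe]
    simp only [Set.ncard_empty, Nat.cast_zero]
    have h1 : (0:ℝ) ≤ (projDelta (∅ : Set (∀ i, B i)) : ℝ) := Nat.cast_nonneg _
    have h2 : (0:ℝ) ≤ Real.log ((projDelta (∅ : Set (∀ i, B i)) : ℝ) + 1) :=
      Real.log_nonneg (by linarith)
    exact mul_nonneg (mul_nonneg hsum0 h1) (pow_nonneg h2 _)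
  · have hbound := (hαf s').2 B A hfin
      ⟨X, fun j => isTpoDownset_of_basic (hbasic j), hAX⟩ hfree
    have hδ2 : 2 ≤ projDelta A := two_le_projDelta hr hfin hAne
    have hδR : (2:ℝ) ≤ (projDelta A : ℝ) := by exact_mod_cast hδ2
    have hlog1 : 1 ≤ Real.log ((projDelta A : ℝ) + 1) := one_le_log_of_two_le hδR
    have hexp : s' * (r - 1) ≤ s * (2 ^ (r - 1) - 1) := by
      have h1 : r - 1 ≤ 2 ^ (r - 1) - 1 := by
        have := Nat.lt_two_pow_self (n := r - 1)
        omega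
      exact Nat.mul_le_mul hs' h1
    have hpowle : Real.log ((projDelta A : ℝ)+1) ^ (s' * (r-1))
        ≤ Real.log ((projDelta A : ℝ)+1) ^ (s * (2^(r-1)-1)) := pow_le_pow_right₀ hlog1 hexp
    refine le_trans hbound ?_
    calc αf s' * (projDelta A : ℝ) * Real.log ((projDelta A : ℝ)+1) ^ (s' * (r-1))
        ≤ (∑ s'' ∈ Finset.range (s+1), αf s'') * (projDelta A : ℝ)
          * Real.log ((projDelta A : ℝ)+1) ^ (s' * (r-1)) := by
          refine mul_le_mul_of_nonneg_right ?_ (pow_nonneg (by linarith) _)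
          exact mul_le_mul_of_nonneg_right hmem (Nat.cast_nonneg _)
    _ ≤ (∑ s'' ∈ Finset.range (s+1), αf s'') * (projDelta A : ℝ)
          * Real.log ((projDelta A : ℝ)+1) ^ (s * (2^(r-1)-1)) :=
          mul_le_mul_of_nonneg_left hpowle (mul_nonneg hsum0 (Nat.cast_nonneg _))
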